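/- In the monopoly setting, if π is a revenue-maximizing partition that additionally satisfies SW(π) ≥ SW(π') for every revenue-maximizing partition π', then SW(π) ≥ (p^1 + p^2)/(2·|G|). -/

import Mathlib

open Finset

variable {B G S : Type*} [Fintype B] [Fintype G] [Fintype S]
variable [DecidableEq B] [DecidableEq G] [DecidableEq S]

/-- `v_b(Ḡ)`: buyer `b`'s total valuation of the variants in `Ḡ`. -/
def vsum (v : B → G → ℕ) (b : B) (Gb : Finset G) : ℕ := ∑ g ∈ Gb, v b g

/-- `V̄1(B̄,Ḡ)`: the largest value among `(v_b(Ḡ))_{b∈B̄}` (`0` if `B̄ = ∅`). -/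
def V1 (v : B → G → ℕ) (Bb : Finset B) (Gb : Finset G) : ℕ :=
  Bb.sup (fun b => vsum v b Gb)

/-- `V̄2(B̄,Ḡ)`: the second-largest value, counted with multiplicity
(`0` if `|B̄| ≤ 1`).  It equals the minimum, over removal of one buyer,
of the maximum over the remaining buyers. -/
def V2 (v : B → G → ℕ) (Bb : Finset B) (Gb : Finset G) : ℕ :=
  if h : Bb.Nonempty then Bb.inf' h (fun b => V1 v (Bb.erase b) Gb) else 0

/-- The set of buyers choosing seller `s` under the assignment `σ`. -/
def buyersOf (σ : B → S) (s : S) : Finset B := univ.filter (fun b => σ b = s)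

/-- Buyer `b`'s utility in the multi-seller game. -/
def ubuyer (v : B → G → ℕ) (τ : S → Finpartition (univ : Finset G)) (σ : B → S) (b : B) : ℚ :=
  (Fintype.card G : ℚ)⁻¹ *
    ∑ Gb ∈ (τ (σ b)).parts, max ((vsum v b Gb : ℚ) - (V2 v (buyersOf σ (σ b)) Gb : ℚ)) 0

/-- Seller `s`'s utility in the multi-seller game. -/
def useller (v : B → G → ℕ) (τ : S → Finpartition (univ : Finset G)) (σ : B → S) (s : S) : ℚ :=
  (Fintype.card G : ℚ)⁻¹ * ∑ Gb ∈ (τ s).parts, (V2 v (buyersOf σ s) Gb : ℚ)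

/-- Social welfare in the multi-seller game. -/
def SWm (v : B → G → ℕ) (τ : S → Finpartition (univ : Finset G)) (σ : B → S) : ℚ :=
  ((Fintype.card S : ℚ) * (Fintype.card G : ℚ))⁻¹ *
    ∑ s : S, ∑ Gb ∈ (τ s).parts, (V1 v (buyersOf σ s) Gb : ℚ)

/-- Social welfare in the single-seller (monopoly) game. -/
def SW1 (v : B → G → ℕ) (π : Finpartition (univ : Finset G)) : ℚ :=
  (Fintype.card G : ℚ)⁻¹ * ∑ Gb ∈ π.parts, (V1 v (univ : Finset B) Gb : ℚ)

/-- The monopolist's revenue. -/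
def rev1 (v : B → G → ℕ) (π : Finpartition (univ : Finset G)) : ℚ :=
  (Fintype.card G : ℚ)⁻¹ * ∑ Gb ∈ π.parts, (V2 v (univ : Finset B) Gb : ℚ)

/-- Buyer `b`'s utility in the monopoly game. -/
def ub1 (v : B → G → ℕ) (π : Finpartition (univ : Finset G)) (b : B) : ℚ :=
  (Fintype.card G : ℚ)⁻¹ *
    ∑ Gb ∈ π.parts, max ((vsum v b Gb : ℚ) - (V2 v (univ : Finset B) Gb : ℚ)) 0

/-- `π` refines `π̂`: every block of `π̂` is a union of blocks of `π`. -/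
def IsRefinement (π πhat : Finpartition (univ : Finset G)) : Prop :=
  ∀ t ∈ πhat.parts, ∃ P ⊆ π.parts, t = P.sup id

/-- `σ` is a (pure) Nash equilibrium of the buyers' subgame induced by `τ`. -/
def IsNash (v : B → G → ℕ) (τ : S → Finpartition (univ : Finset G)) (σ : B → S) : Prop :=
  ∀ (b : B) (s : S), ubuyer v τ (Function.update σ b s) b ≤ ubuyer v τ σ b

/-- `p^i(G)`: the number of goods demanded by at least `i` buyers. -/
def pdem (v : B → G → ℕ) (i : ℕ) : ℕ :=
  (univ.filter (fun g : G => i ≤ ∑ b : B, v b g)).card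

/-- The trivial (indiscrete) partition `{G}`, which discloses nothing. -/
def trivPart (G : Type*) [Fintype G] [DecidableEq G] [Nonempty G] :
    Finpartition (univ : Finset G) :=
  Finpartition.indiscrete Finset.univ_nonempty.ne_empty

/-- `(π, f)` is a pure subgame perfect equilibrium of the two-stage game. -/
def IsSPE (v : B → G → ℕ) (π : S → Finpartition (univ : Finset G))
    (f : (S → Finpartition (univ : Finset G)) → (B → S)) : Prop :=
  (∀ τ, IsNash v τ (f τ)) ∧
  ∀ (s : S) (ρ : Finpartition (univ : Finset G)),
    useller v (Function.update π s ρ) (f (Function.update π s ρ)) s ≤ useller v π (f π) s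

/- ========== auxiliary lemmas ========== -/

section AuxLemmas

set_option linter.unusedSectionVars false

lemma vsum_le_V1' (v : B → G → ℕ) {b : B} {s : Finset B} (hb : b ∈ s) (X : Finset G) :
    vsum v b X ≤ V1 v s X := by
  rw [V1]; exact Finset.le_sup (f := fun b => vsum v b X) hb

lemma vsum_le_V1 (v : B → G → ℕ) (b : B) (X : Finset G) : vsum v b X ≤ V1 v univ X :=
  vsum_le_V1' v (mem_univ b) X

lemma pair_le_V2 [Nonempty B] (v : B → G → ℕ) {c c' : B} (h : c ≠ c') (X : Finset G) :
    min (vsum v c X) (vsum v c' X) ≤ V2 v univ X := by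
  rw [V2, dif_pos univ_nonempty]
  refine Finset.le_inf' _ _ fun b _ => ?_
  rcases eq_or_ne b c with rfl | hbc
  · exact le_trans (min_le_right _ _) (vsum_le_V1' v (mem_erase.2 ⟨h.symm, mem_univ c'⟩) X)
  · exact le_trans (min_le_left _ _) (vsum_le_V1' v (mem_erase.2 ⟨hbc.symm, mem_univ c⟩) X)

lemma V2_le_V1 [Nonempty B] (v : B → G → ℕ) (X : Finset G) : V2 v univ X ≤ V1 v univ X := by
  rw [V2, dif_pos univ_nonempty]
  obtain ⟨b, hb⟩ := (univ_nonempty : (univ : Finset B).Nonempty)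
  refine le_trans (Finset.inf'_le _ hb) ?_
  rw [V1, V1]
  exact Finset.sup_mono (erase_subset _ _)

lemma exists_top_two [Nonempty B] (v : B → G → ℕ) (hB : 2 ≤ Fintype.card B) (X : Finset G) :
    ∃ b1 b2 : B, b1 ≠ b2 ∧ vsum v b1 X = V1 v univ X ∧ vsum v b2 X = V2 v univ X := by
  obtain ⟨b1, -, hb1⟩ :=
    Finset.exists_mem_eq_sup (univ : Finset B) univ_nonempty (fun b => vsum v b X)
  have hb1' : vsum v b1 X = V1 v univ X := by rw [V1, hb1]
  have hne : (univ.erase b1).Nonempty := by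
    rw [← Finset.card_pos, Finset.card_erase_of_mem (mem_univ b1), Finset.card_univ]
    omega
  obtain ⟨b2, hb2mem, hb2⟩ := Finset.exists_mem_eq_sup _ hne (fun b => vsum v b X)
  have hb2' : V1 v (univ.erase b1) X = vsum v b2 X := by rw [V1, hb2]
  have hb2ne : b2 ≠ b1 := (Finset.mem_erase.1 hb2mem).1
  refine ⟨b1, b2, hb2ne.symm, hb1', ?_⟩
  rw [V2, dif_pos univ_nonempty]
  apply le_antisymm
  · refine Finset.le_inf' _ _ fun b _ => ?_
    rcases eq_or_ne b b1 with rfl | hbb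
    · exact hb2'.ge
    · calc vsum v b2 X ≤ V1 v univ X := vsum_le_V1 v b2 X
      _ = vsum v b1 X := hb1'.symm
      _ ≤ V1 v (univ.erase b) X := vsum_le_V1' v (mem_erase.2 ⟨hbb.symm, mem_univ b1⟩) X
  · exact le_trans (Finset.inf'_le _ (mem_univ b1)) (le_of_eq hb2')

lemma exists_demander (v : B → G → ℕ) {g : G} (h : 1 ≤ ∑ b : B, v b g) :
    ∃ c : B, 1 ≤ v c g := by
  by_contra hc
  push_neg at hc
  rw [Finset.sum_eq_zero (fun b _ => by have := hc b; omega)] at h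
  omega

lemma exists_two_demanders (v : B → G → ℕ) (hv : ∀ b g, v b g ≤ 1) {g : G}
    (h : 2 ≤ ∑ b : B, v b g) :
    ∃ c c' : B, c ≠ c' ∧ 1 ≤ v c g ∧ 1 ≤ v c' g := by
  obtain ⟨c, hc⟩ := exists_demander v (one_le_two.trans h)
  have hsplit : v c g + ∑ b ∈ univ.erase c, v b g = ∑ b : B, v b g := by
    exact Finset.add_sum_erase univ (fun b => v b g) (mem_univ c)
  have h1 : ∑ b ∈ univ.erase c, v b g ≠ 0 := by have := hv c g; omega
  obtain ⟨c', hc'mem, hc'⟩ := Finset.exists_ne_zero_of_sum_ne_zero h1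
  exact ⟨c', c, (Finset.mem_erase.1 hc'mem).1, by omega, hc⟩

lemma vsum_singleton (v : B → G → ℕ) (b : B) (g : G) : vsum v b {g} = v b g :=
  Finset.sum_singleton _ _

lemma vsum_erase_add (v : B → G → ℕ) (b : B) {g : G} {P : Finset G} (hg : g ∈ P) :
    vsum v b (P.erase g) + v b g = vsum v b P :=
  Finset.sum_erase_add P _ hg

section Split
variable (π : Finpartition (univ : Finset G)) (P : Finset G) (g : G)

def splitTwo (hP : P ∈ π.parts) (hg : g ∈ P) (hne : (P.erase g).Nonempty) :
    Finpartition (univ : Finset G) where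
  parts := insert {g} (insert (P.erase g) (π.parts.erase P))
  supIndep := by
    rw [Finset.supIndep_iff_pairwiseDisjoint]
    have base : ((π.parts.erase P : Finset (Finset G)) : Set (Finset G)).PairwiseDisjoint id :=
      π.disjoint.subset (by exact_mod_cast Finset.erase_subset _ _)
    have hdisjP : ∀ Q ∈ π.parts.erase P, Disjoint P Q := fun Q hQ =>
      π.disjoint hP (π.parts.erase_subset P hQ) (Finset.ne_of_mem_erase hQ).symm
    have step1 : ((insert (P.erase g) (π.parts.erase P) : Finset (Finset G)) :
        Set (Finset G)).PairwiseDisjoint id := by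
      rw [Finset.coe_insert]
      refine base.insert fun Q hQ _ => ?_
      simp only [id_eq]
      exact Finset.disjoint_of_subset_left (Finset.erase_subset _ _)
        (hdisjP Q (Finset.mem_coe.1 hQ))
    rw [Finset.coe_insert]
    refine step1.insert fun Q hQ hne' => ?_
    rw [Finset.mem_coe, Finset.mem_insert] at hQ
    simp only [id_eq]
    rcases hQ with rfl | hQ
    · exact Finset.disjoint_singleton_left.2 (Finset.notMem_erase _ _)
    · exact Finset.disjoint_of_subset_left (Finset.singleton_subset_iff.2 hg) (hdisjP Q hQ)
  sup_parts := by
    have h1 : ({g} : Finset G) ⊔ (P.erase g) = P := by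
      rw [Finset.sup_eq_union, ← Finset.insert_eq, Finset.insert_erase hg]
    rw [Finset.sup_insert, Finset.sup_insert, id_eq, id_eq, ← sup_assoc, h1]
    have h2 : π.parts = insert P (π.parts.erase P) := (Finset.insert_erase hP).symm
    have h3 : (insert P (π.parts.erase P)).sup id = univ := by rw [← h2, π.sup_parts]
    rw [Finset.sup_insert, id_eq] at h3
    exact h3
  bot_notMem := by
    simp only [Finset.mem_insert, bot_eq_empty]
    push_neg
    refine ⟨(Finset.singleton_nonempty g).ne_empty.symm, hne.ne_empty.symm, fun hmem => ?_⟩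
    exact π.bot_notMem (π.parts.erase_subset P hmem)

lemma splitTwo_mem1 (hP : P ∈ π.parts) (hg : g ∈ P) :
    ({g} : Finset G) ∉ insert (P.erase g) (π.parts.erase P) := by
  rw [Finset.mem_insert]
  rintro (h | h)
  · exact Finset.notMem_erase g P (h ▸ Finset.mem_singleton_self g)
  · have : Disjoint P {g} :=
      π.disjoint hP (π.parts.erase_subset P h) (Finset.ne_of_mem_erase h).symm
    exact (Finset.disjoint_right.1 this (Finset.mem_singleton_self g)) hg

lemma splitTwo_mem2 (hP : P ∈ π.parts) (hne : (P.erase g).Nonempty) :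
    P.erase g ∉ π.parts.erase P := by
  intro h
  have hd : Disjoint P (P.erase g) :=
    π.disjoint hP (π.parts.erase_subset P h) (Finset.ne_of_mem_erase h).symm
  obtain ⟨x, hx⟩ := hne
  exact Finset.disjoint_right.1 hd hx (Finset.mem_of_mem_erase hx)

lemma sum_splitTwo {M : Type*} [AddCommMonoid M] (hP : P ∈ π.parts) (hg : g ∈ P)
    (hne : (P.erase g).Nonempty) (f : Finset G → M) :
    ∑ t ∈ (splitTwo π P g hP hg hne).parts, f t
      = (f {g} + f (P.erase g)) + ∑ t ∈ π.parts.erase P, f t := by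
  show ∑ t ∈ insert {g} (insert (P.erase g) (π.parts.erase P)), f t = _
  rw [Finset.sum_insert (splitTwo_mem1 π P g hP hg),
      Finset.sum_insert (splitTwo_mem2 π P g hP hne), add_assoc]

lemma sum_parts_eq {M : Type*} [AddCommMonoid M] (hP : P ∈ π.parts) (f : Finset G → M) :
    ∑ t ∈ π.parts, f t = f P + ∑ t ∈ π.parts.erase P, f t :=
  (Finset.add_sum_erase _ f hP).symm

end Split

lemma pdem_eq (v : B → G → ℕ) (i : ℕ) (π : Finpartition (univ : Finset G)) :
    pdem v i = ∑ P ∈ π.parts, (P.filter (fun g => i ≤ ∑ b : B, v b g)).card := by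
  have huniv : (univ : Finset G) = π.parts.biUnion id := by
    rw [← Finset.sup_eq_biUnion, π.sup_parts]
  have h2 : filter (fun g => i ≤ ∑ b : B, v b g) univ
      = filter (fun g => i ≤ ∑ b : B, v b g) (π.parts.biUnion id) := by rw [← huniv]
  rw [pdem, h2, Finset.filter_biUnion, Finset.card_biUnion
    (fun x hx y hy hxy => Finset.disjoint_filter_filter (π.disjoint hx hy hxy))]
  simp only [id_eq]

lemma split_key [Nonempty B] [Nonempty G] (v : B → G → ℕ)
    (π : Finpartition (univ : Finset G))
    (hmax : ∀ π' : Finpartition (univ : Finset G), rev1 v π' ≤ rev1 v π)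
    (hbest : ∀ π' : Finpartition (univ : Finset G),
        (∀ π'' : Finpartition (univ : Finset G), rev1 v π'' ≤ rev1 v π') →
        SW1 v π' ≤ SW1 v π)
    {P : Finset G} {g : G} (hP : P ∈ π.parts) (hg : g ∈ P) (hne : (P.erase g).Nonempty)
    (h2 : V2 v univ P ≤ V2 v univ {g} + V2 v univ (P.erase g)) :
    V2 v univ {g} + V2 v univ (P.erase g) ≤ V2 v univ P ∧
    V1 v univ {g} + V1 v univ (P.erase g) ≤ V1 v univ P := by
  set π' := splitTwo π P g hP hg hne with hπ'def
  have hGpos : (0:ℚ) < (Fintype.card G : ℚ) := by exact_mod_cast Fintype.card_pos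
  have hcpos : (0:ℚ) < (Fintype.card G : ℚ)⁻¹ := inv_pos.2 hGpos
  have cancel : ∀ x y : ℚ,
      ((Fintype.card G : ℚ)⁻¹ * x ≤ (Fintype.card G : ℚ)⁻¹ * y ↔ x ≤ y) := fun x y =>
    ⟨fun h => le_of_mul_le_mul_left h hcpos, fun h => mul_le_mul_of_nonneg_left h hcpos.le⟩
  have key : ∀ F : Finset G → ℕ,
      ((Fintype.card G : ℚ)⁻¹ * ∑ t ∈ π'.parts, (F t : ℚ)
        ≤ (Fintype.card G : ℚ)⁻¹ * ∑ t ∈ π.parts, (F t : ℚ))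
        ↔ F {g} + F (P.erase g) ≤ F P := by
    intro F
    rw [cancel, sum_splitTwo π P g hP hg hne (fun t => (F t : ℚ)),
        sum_parts_eq π P hP (fun t => (F t : ℚ)), add_le_add_iff_right]
    constructor <;> intro h <;> exact_mod_cast h
  have key2 : ∀ F : Finset G → ℕ,
      ((Fintype.card G : ℚ)⁻¹ * ∑ t ∈ π.parts, (F t : ℚ)
        ≤ (Fintype.card G : ℚ)⁻¹ * ∑ t ∈ π'.parts, (F t : ℚ))
        ↔ F P ≤ F {g} + F (P.erase g) := by
    intro F
    rw [cancel, sum_splitTwo π P g hP hg hne (fun t => (F t : ℚ)),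
        sum_parts_eq π P hP (fun t => (F t : ℚ)), add_le_add_iff_right]
    constructor <;> intro h <;> exact_mod_cast h
  have hmaxπ' : rev1 v π' ≤ rev1 v π := hmax π'
  rw [rev1, rev1] at hmaxπ'
  have hA : V2 v univ {g} + V2 v univ (P.erase g) ≤ V2 v univ P :=
    (key (fun t => V2 v univ t)).1 hmaxπ'
  have hrev_ge : rev1 v π ≤ rev1 v π' := by
    rw [rev1, rev1]
    exact (key2 (fun t => V2 v univ t)).2 h2
  have hrevmax' : ∀ π'' : Finpartition (univ : Finset G), rev1 v π'' ≤ rev1 v π' :=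
    fun π'' => (hmax π'').trans hrev_ge
  have hSW : SW1 v π' ≤ SW1 v π := hbest π' hrevmax'
  rw [SW1, SW1] at hSW
  exact ⟨hA, (key (fun t => V1 v univ t)).1 hSW⟩

lemma part_key [Nonempty B] [Nonempty G] (v : B → G → ℕ) (hv : ∀ b g, v b g ≤ 1)
    (π : Finpartition (univ : Finset G))
    (hmax : ∀ π' : Finpartition (univ : Finset G), rev1 v π' ≤ rev1 v π)
    (hbest : ∀ π' : Finpartition (univ : Finset G),
        (∀ π'' : Finpartition (univ : Finset G), rev1 v π'' ≤ rev1 v π') →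
        SW1 v π' ≤ SW1 v π)
    {P : Finset G} (hP : P ∈ π.parts) :
    (P.filter (fun g => 1 ≤ ∑ b : B, v b g)).card
      + (P.filter (fun g => 2 ≤ ∑ b : B, v b g)).card ≤ 2 * V1 v univ P := by
  rcases lt_or_ge (Fintype.card B) 2 with hB | hB
  · -- only one buyer
    have hB1 : Fintype.card B = 1 := le_antisymm (by omega) Fintype.card_pos
    obtain ⟨b0, hb0⟩ := Fintype.card_eq_one_iff.1 hB1
    have huniv : (univ : Finset B) = {b0} :=
      Finset.eq_singleton_iff_unique_mem.2 ⟨mem_univ b0, fun x _ => hb0 x⟩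
    have hdeg : ∀ g : G, ∑ b : B, v b g = v b0 g := fun g => by
      rw [huniv, Finset.sum_singleton]
    have h2 : (P.filter (fun g => 2 ≤ ∑ b : B, v b g)) = ∅ := by
      refine Finset.filter_eq_empty_iff.2 fun g _ => ?_
      rw [hdeg g]
      have := hv b0 g; omega
    have h1 : (P.filter (fun g => 1 ≤ ∑ b : B, v b g)).card ≤ vsum v b0 P := by
      rw [Finset.card_filter, vsum]
      refine Finset.sum_le_sum fun g _ => ?_
      rw [hdeg g]
      split_ifs with h
      · exact h
      · exact Nat.zero_le _
    have h3 := vsum_le_V1 v b0 P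
    rw [h2]
    simp only [Finset.card_empty]
    omega
  · obtain ⟨b1, b2, hb12, ha, hs⟩ := exists_top_two v hB P
    have hE := V2_le_V1 v P
    have point : ∀ g ∈ P,
        ((if 1 ≤ ∑ b : B, v b g then 1 else 0) + (if 2 ≤ ∑ b : B, v b g then 1 else 0) : ℕ)
          ≤ v b1 g + v b2 g := by
      intro g hg
      by_cases hd1 : 1 ≤ ∑ b : B, v b g
      swap
      · rw [if_neg hd1, if_neg (fun h => hd1 (le_trans one_le_two h))]
        exact Nat.zero_le _
      have hvb1 := hv b1 g
      have hvb2 := hv b2 g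
      by_cases hd2 : 2 ≤ ∑ b : B, v b g
      · rw [if_pos hd1, if_pos hd2]
        by_contra hlt
        push_neg at hlt
        obtain ⟨c, c', hcc, hc, hc'⟩ := exists_two_demanders v hv hd2
        have hPg : P ≠ {g} := by
          rintro rfl
          rw [vsum_singleton] at ha hs
          have hV1 : v c g ≤ V1 v univ {g} := by
            rw [← vsum_singleton v c g]; exact vsum_le_V1 v c {g}
          have hV2 : min (vsum v c {g}) (vsum v c' {g}) ≤ V2 v univ {g} := pair_le_V2 v hcc {g}
          rw [vsum_singleton, vsum_singleton] at hV2
          have hV2' : 1 ≤ V2 v univ {g} := le_trans (le_min hc hc') hV2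
          omega
        have hne : (P.erase g).Nonempty :=
          ((Finset.nontrivial_iff_ne_singleton hg).2 hPg).erase_nonempty
        have hx1 := vsum_erase_add v b1 hg
        have hx2 := vsum_erase_add v b2 hg
        have hD1 := vsum_le_V1 v b1 (P.erase g)
        have hD2 := vsum_le_V1 v b2 (P.erase g)
        have hmin := pair_le_V2 v hb12 (P.erase g)
        have hBv : vsum v b1 (P.erase g) ≤ V2 v univ (P.erase g)
            ∨ vsum v b2 (P.erase g) ≤ V2 v univ (P.erase g) := by
          rcases le_total (vsum v b1 (P.erase g)) (vsum v b2 (P.erase g)) with h | h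
          · exact Or.inl ((min_eq_left h) ▸ hmin)
          · exact Or.inr ((min_eq_right h) ▸ hmin)
        have hgV2 : 1 ≤ V2 v univ {g} := by
          have hm := pair_le_V2 v hcc {g}
          rw [vsum_singleton, vsum_singleton] at hm
          exact le_trans (le_min hc hc') hm
        have hgV1 : 1 ≤ V1 v univ {g} := by
          have := vsum_le_V1 v c {g}
          rw [vsum_singleton] at this
          omega
        have h2 : V2 v univ P ≤ V2 v univ {g} + V2 v univ (P.erase g) := by
          rcases hBv with h | h <;> omega
        obtain ⟨hrle, hwle⟩ := split_key v π hmax hbest hP hg hne h2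
        rcases hBv with h | h <;> omega
      · rw [if_pos hd1, if_neg hd2]
        by_contra hlt
        push_neg at hlt
        obtain ⟨c, hc⟩ := exists_demander v hd1
        have hPg : P ≠ {g} := by
          rintro rfl
          rw [vsum_singleton] at ha
          have hV1 : v c g ≤ V1 v univ {g} := by
            rw [← vsum_singleton v c g]; exact vsum_le_V1 v c {g}
          omega
        have hne : (P.erase g).Nonempty :=
          ((Finset.nontrivial_iff_ne_singleton hg).2 hPg).erase_nonempty
        have hx1 := vsum_erase_add v b1 hg
        have hx2 := vsum_erase_add v b2 hg
        have hD1 := vsum_le_V1 v b1 (P.erase g)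
        have hmin := pair_le_V2 v hb12 (P.erase g)
        have hBv : vsum v b1 (P.erase g) ≤ V2 v univ (P.erase g)
            ∨ vsum v b2 (P.erase g) ≤ V2 v univ (P.erase g) := by
          rcases le_total (vsum v b1 (P.erase g)) (vsum v b2 (P.erase g)) with h | h
          · exact Or.inl ((min_eq_left h) ▸ hmin)
          · exact Or.inr ((min_eq_right h) ▸ hmin)
        have hgV1 : 1 ≤ V1 v univ {g} := by
          have := vsum_le_V1 v c {g}
          rw [vsum_singleton] at this
          omega
        have h2 : V2 v univ P ≤ V2 v univ {g} + V2 v univ (P.erase g) := by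
          rcases hBv with h | h <;> omega
        obtain ⟨hrle, hwle⟩ := split_key v π hmax hbest hP hg hne h2
        rcases hBv with h | h <;> omega
    calc (P.filter (fun g => 1 ≤ ∑ b : B, v b g)).card
          + (P.filter (fun g => 2 ≤ ∑ b : B, v b g)).card
        = ∑ g ∈ P, ((if 1 ≤ ∑ b : B, v b g then 1 else 0)
            + (if 2 ≤ ∑ b : B, v b g then 1 else 0) : ℕ) := by
          rw [Finset.card_filter, Finset.card_filter, ← Finset.sum_add_distrib]
      _ ≤ ∑ g ∈ P, (v b1 g + v b2 g) := Finset.sum_le_sum point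
      _ = vsum v b1 P + vsum v b2 P := Finset.sum_add_distrib
      _ = V1 v univ P + V2 v univ P := by rw [ha, hs]
      _ ≤ 2 * V1 v univ P := by omega

end AuxLemmas

/-- a welfare-best revenue-maximizing partition has social
welfare at least `(p¹ + p²)/(2·|G|)`. -/
theorem revmax_best_sw_ge_p1_p2_half [Nonempty B] [Nonempty G]
    (v : B → G → ℕ) (hv : ∀ b g, v b g ≤ 1)
    (π : Finpartition (univ : Finset G))
    (hmax : ∀ π' : Finpartition (univ : Finset G), rev1 v π' ≤ rev1 v π)
    (hbest : ∀ π' : Finpartition (univ : Finset G),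
        (∀ π'' : Finpartition (univ : Finset G), rev1 v π'' ≤ rev1 v π') →
        SW1 v π' ≤ SW1 v π) :
    ((pdem v 1 : ℚ) + (pdem v 2 : ℚ)) / (2 * (Fintype.card G : ℚ)) ≤ SW1 v π := by
  
  have hGpos : (0:ℚ) < (Fintype.card G : ℚ) := by exact_mod_cast Fintype.card_pos
  have hnat : pdem v 1 + pdem v 2 ≤ 2 * ∑ P ∈ π.parts, V1 v univ P := by
    rw [pdem_eq v 1 π, pdem_eq v 2 π, Finset.mul_sum, ← Finset.sum_add_distrib]
    exact Finset.sum_le_sum fun P hP => part_key v hv π hmax hbest hP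
  rw [SW1, div_le_iff₀ (by linarith : (0:ℚ) < 2 * (Fintype.card G : ℚ))]
  have hT : (∑ t ∈ π.parts, ((V1 v (univ : Finset B) t : ℕ) : ℚ))
      = ((∑ t ∈ π.parts, V1 v (univ : Finset B) t : ℕ) : ℚ) := by push_cast; rfl
  calc (pdem v 1 : ℚ) + (pdem v 2 : ℚ)
      ≤ ((2 * ∑ P ∈ π.parts, V1 v (univ : Finset B) P : ℕ) : ℚ) := by exact_mod_cast hnat
    _ = (Fintype.card G : ℚ)⁻¹ * (∑ t ∈ π.parts, ((V1 v (univ : Finset B) t : ℕ) : ℚ))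
        * (2 * (Fintype.card G : ℚ)) := by
        rw [hT]
        field_simp
        push_cast
        ring
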